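/- Let Λ ≤ (ℝ_{>0},·), Γ a Z·Λ-submodule of ℝ, and ℓ ∈ Γ with ℓ > 0. Every element f of V(Γ,Λ,ℓ) factors uniquely as f = g·h where h ∈ F(Γ,Λ,ℓ) (the subgroup of increasing continuous elements) and g ∈ IE(Γ,ℓ) (the subgroup of elements with derivative 1 wherever differentiable, i.e. interval exchanges with translation parts in Γ). That is, V(Γ,Λ,ℓ) = IE(Γ,ℓ) · F(Γ,Λ,ℓ) with unique factorization (a Zappa–Szép product). -/

import Mathlib

open Set

/-- `f` is an element of Stein's group `V(Γ,Λ,ℓ)`: a (right-continuous) piecewise linear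
bijection of `(0,ℓ]` with finitely many slopes, all in `Λ`, and finitely many
nondifferentiable/discontinuity points, all in `Γ`: there is a partition
`0 = x₀ < x₁ < ⋯ < x_n = ℓ` with breakpoints in `Γ` such that on each `(xᵢ, xᵢ₊₁]`,
`f(t) = μᵢ t + cᵢ` with `μᵢ ∈ Λ` and `cᵢ ∈ Γ`. -/
def IsSteinV (Γ Λ : Set ℝ) (ℓ : ℝ) (f : ℝ → ℝ) : Prop :=
  Set.BijOn f (Ioc 0 ℓ) (Ioc 0 ℓ) ∧
  ∃ (n : ℕ) (x μ c : ℕ → ℝ), 0 < n ∧ x 0 = 0 ∧ x n = ℓ ∧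
    (∀ i < n, x i < x (i + 1)) ∧ (∀ i ≤ n, x i ∈ Γ) ∧
    (∀ i < n, μ i ∈ Λ ∧ c i ∈ Γ) ∧
    (∀ i < n, ∀ t ∈ Ioc (x i) (x (i + 1)), f t = μ i * t + c i)

/-- `f ∈ F(Γ,Λ,ℓ)`: an increasing continuous element of `V(Γ,Λ,ℓ)`. -/
def IsSteinF (Γ Λ : Set ℝ) (ℓ : ℝ) (f : ℝ → ℝ) : Prop :=
  IsSteinV Γ Λ ℓ f ∧ StrictMonoOn f (Ioc 0 ℓ) ∧ ContinuousOn f (Ioc 0 ℓ)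

/-- `f ∈ IE(Γ,ℓ)`: an interval exchange, i.e. an element of `V` all of whose slopes are `1`
(a piecewise translation with translation parts in `Γ`). -/
def IsSteinIE (Γ : Set ℝ) (ℓ : ℝ) (f : ℝ → ℝ) : Prop :=
  IsSteinV Γ {(1:ℝ)} ℓ f

/- ### Auxiliary material -/

private lemma seqMono {x : ℕ → ℝ} {n : ℕ} (hx : ∀ i < n, x i < x (i+1)) :
    ∀ i j, i ≤ j → j ≤ n → x i ≤ x j := by
  intro i j hij hjn
  induction j with
  | zero =>
    have : i = 0 := Nat.le_zero.mp hij
    subst this; exact le_refl _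
  | succ k ih =>
    rcases Nat.lt_or_ge i (k+1) with h | h
    · have h1 : x i ≤ x k := ih (Nat.lt_succ_iff.mp h) (by omega)
      exact h1.trans (le_of_lt (hx k (by omega)))
    · have : i = k + 1 := by omega
      subst this; exact le_refl _

private lemma findIoc (x : ℕ → ℝ) :
    ∀ n : ℕ, 0 < n → (∀ i < n, x i < x (i+1)) → ∀ s : ℝ, x 0 < s → s ≤ x n →
      ∃ j, j < n ∧ x j < s ∧ s ≤ x (j+1) := by
  intro n
  induction n with
  | zero => intro h; exact absurd h (lt_irrefl 0)
  | succ m ih =>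
    intro _ hx s hs0 hsn
    rcases le_or_gt s (x m) with h | h
    · have hm : 0 < m := by
        rcases Nat.eq_zero_or_pos m with rfl | hm
        · exact absurd (hs0.trans_le h) (lt_irrefl _)
        · exact hm
      obtain ⟨j, hj, hj2, hj3⟩ := ih hm (fun i hi => hx i (by omega)) s hs0 h
      exact ⟨j, by omega, hj2, hj3⟩
    · exact ⟨m, by omega, h, hsn⟩

private lemma findIco (x : ℕ → ℝ) :
    ∀ n : ℕ, 0 < n → (∀ i < n, x i < x (i+1)) → ∀ s : ℝ, x 0 ≤ s → s < x n →
      ∃ j, j < n ∧ x j ≤ s ∧ s < x (j+1) := by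
  intro n
  induction n with
  | zero => intro h; exact absurd h (lt_irrefl 0)
  | succ m ih =>
    intro _ hx s hs0 hsn
    rcases lt_or_ge s (x m) with h | h
    · have hm : 0 < m := by
        rcases Nat.eq_zero_or_pos m with rfl | hm
        · exact absurd (hs0.trans_lt h) (lt_irrefl _)
        · exact hm
      obtain ⟨j, hj, hj2, hj3⟩ := ih hm (fun i hi => hx i (by omega)) s hs0 h
      exact ⟨j, by omega, hj2, hj3⟩
    · exact ⟨m, by omega, h, hsn⟩

private lemma clipMono {a b : ℝ} (hba : b ≤ a) :
    Monotone (fun t : ℝ => min t a - min t b) := by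
  intro s t hst
  simp only [min_def]
  split_ifs <;> linarith

/-- The continuous increasing piecewise-linear function with breakpoints `x i` and
slopes `μ i`, vanishing at `x 0`. -/
noncomputable def plSum (n : ℕ) (x μ : ℕ → ℝ) (t : ℝ) : ℝ :=
  ∑ j ∈ Finset.range n, μ j * (min t (x (j+1)) - min t (x j))

private lemma plSum_continuous (n : ℕ) (x μ : ℕ → ℝ) : Continuous (plSum n x μ) := by
  apply continuous_finset_sum
  intro j _
  exact continuous_const.mul
    ((continuous_id.min continuous_const).sub (continuous_id.min continuous_const))

private lemma plSum_piece {n : ℕ} {x μ : ℕ → ℝ} (hx : ∀ i < n, x i < x (i+1))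
    {i : ℕ} (hi : i < n) {t : ℝ} (ht1 : x i ≤ t) (ht2 : t ≤ x (i+1)) :
    plSum n x μ t = (∑ j ∈ Finset.range i, μ j * (x (j+1) - x j)) + μ i * (t - x i) := by
  have hmono := seqMono hx
  unfold plSum
  rw [← Finset.sum_range_add_sum_Ico _ (Nat.succ_le_of_lt hi), Finset.sum_range_succ]
  have h1 : ∑ j ∈ Finset.range i, μ j * (min t (x (j+1)) - min t (x j))
      = ∑ j ∈ Finset.range i, μ j * (x (j+1) - x j) := by
    refine Finset.sum_congr rfl fun j hj => ?_
    have hji := Finset.mem_range.mp hj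
    have h2 : x (j+1) ≤ x i := hmono _ _ (by omega) (by omega)
    have h3 : x j ≤ x i := hmono _ _ (by omega) (by omega)
    rw [min_eq_right (h2.trans ht1), min_eq_right (h3.trans ht1)]
  have h4 : ∑ j ∈ Finset.Ico (i+1) n, μ j * (min t (x (j+1)) - min t (x j)) = 0 := by
    refine Finset.sum_eq_zero fun j hj => ?_
    obtain ⟨hj1, hj2⟩ := Finset.mem_Ico.mp hj
    have h5 : x (i+1) ≤ x j := hmono _ _ hj1 (by omega)
    have h6 : x (i+1) ≤ x (j+1) := hmono _ _ (by omega) (by omega)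
    rw [min_eq_left (ht2.trans h5), min_eq_left (ht2.trans h6)]
    ring
  rw [h1, h4, min_eq_left ht2, min_eq_right ht1]
  ring

private lemma plSum_strictMono {n : ℕ} {x μ : ℕ → ℝ} (hn : 0 < n)
    (hx : ∀ i < n, x i < x (i+1)) (hμ : ∀ i < n, 0 < μ i) :
    StrictMonoOn (plSum n x μ) (Icc (x 0) (x n)) := by
  intro s hs t ht hst
  obtain ⟨j, hj, hj1, hj2⟩ := findIco x n hn hx s hs.1 (lt_of_lt_of_le hst ht.2)
  unfold plSum
  apply Finset.sum_lt_sum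
  · intro k hk
    exact mul_le_mul_of_nonneg_left
      (clipMono (le_of_lt (hx k (Finset.mem_range.mp hk))) hst.le)
      (hμ k (Finset.mem_range.mp hk)).le
  · refine ⟨j, Finset.mem_range.mpr hj, ?_⟩
    have h1 : min s (x (j+1)) = s := min_eq_left hj2.le
    have h2 : min s (x j) = x j := min_eq_right hj1
    have h3 : min t (x j) = x j := min_eq_right (hj1.trans hst.le)
    have h4 : s < min t (x (j+1)) := lt_min hst hj2
    rw [h1, h2, h3]
    have := hμ j hj
    nlinarith

/-- Key measure computation: the image under a piecewise-affine injection of `(0,t]`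
has measure given by `plSum`. -/
private lemma volA {f : ℝ → ℝ} {ℓ : ℝ} {n : ℕ} {x μ c : ℕ → ℝ}
    (hn : 0 < n) (hx0 : x 0 = 0) (hxn : x n = ℓ) (hx : ∀ i < n, x i < x (i+1))
    (hμ : ∀ i < n, 0 < μ i)
    (hpiece : ∀ i < n, ∀ t ∈ Ioc (x i) (x (i + 1)), f t = μ i * t + c i)
    (hinj : Set.InjOn f (Ioc 0 ℓ))
    {t : ℝ} (ht0 : 0 ≤ t) (htl : t ≤ ℓ) :
    MeasureTheory.volume (f '' Ioc 0 t) = ENNReal.ofReal (plSum n x μ t) := by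
  have hmono := seqMono hx
  have hx0le : ∀ i, i ≤ n → (0:ℝ) ≤ x i := fun i hi => hx0 ▸ hmono 0 i (Nat.zero_le i) hi
  have hxltl : ∀ i, i ≤ n → x i ≤ ℓ := fun i hi => hxn ▸ hmono i n hi (le_refl n)
  -- cover of (0,t]
  have cover : Ioc (0:ℝ) t = ⋃ i ∈ Finset.range n, Ioc (x i) (min t (x (i+1))) := by
    ext s
    simp only [mem_iUnion, Finset.mem_range, mem_Ioc, exists_prop]
    constructor
    · rintro ⟨hs0, hst⟩
      obtain ⟨j, hj, hj1, hj2⟩ := findIoc x n hn hx s (by rw [hx0]; exact hs0)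
        (by rw [hxn]; exact hst.trans htl)
      exact ⟨j, hj, hj1, le_min hst hj2⟩
    · rintro ⟨j, hj, hj1, hj2⟩
      have h0j : (0:ℝ) ≤ x j := hx0le j hj.le
      exact ⟨lt_of_le_of_lt h0j hj1, hj2.trans (min_le_left _ _)⟩
  -- each piece is mapped to an interval
  have hsub : ∀ i, i < n → Ioc (x i) (min t (x (i+1))) ⊆ Ioc 0 ℓ := by
    intro i hi s hs
    exact ⟨lt_of_le_of_lt (hx0le i hi.le) hs.1,
      (hs.2.trans (min_le_left _ _)).trans htl⟩
  have himg : ∀ i, i < n → f '' Ioc (x i) (min t (x (i+1)))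
      = Ioc (μ i * x i + c i) (μ i * min t (x (i+1)) + c i) := by
    intro i hi
    have hμi := hμ i hi
    ext r
    constructor
    · rintro ⟨s, ⟨hs1, hs2⟩, rfl⟩
      have hs2' : s ≤ x (i+1) := hs2.trans (min_le_right _ _)
      rw [hpiece i hi s ⟨hs1, hs2'⟩]
      constructor
      · nlinarith
      · nlinarith
    · rintro ⟨hr1, hr2⟩
      refine ⟨(r - c i) / μ i, ⟨?_, ?_⟩, ?_⟩
      · rw [lt_div_iff₀ hμi]; nlinarith
      · rw [div_le_iff₀ hμi]; nlinarith
      · have hmem : (r - c i) / μ i ∈ Ioc (x i) (x (i+1)) := by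
          constructor
          · rw [lt_div_iff₀ hμi]; nlinarith
          · rw [div_le_iff₀ hμi]
            have : min t (x (i+1)) ≤ x (i+1) := min_le_right _ _
            nlinarith
        rw [hpiece i hi _ hmem]
        field_simp
        ring
  -- disjointness of images
  have hdisj : (↑(Finset.range n) : Set ℕ).PairwiseDisjoint
      (fun i => Ioc (μ i * x i + c i) (μ i * min t (x (i+1)) + c i)) := by
    intro i hi j hj hij
    simp only [Finset.coe_range, mem_Iio] at hi hj
    have hpieces : Disjoint (Ioc (x i) (min t (x (i+1)))) (Ioc (x j) (min t (x (j+1)))) := by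
      rcases lt_or_gt_of_ne hij with h | h
      · apply Set.disjoint_left.mpr
        rintro s ⟨hs1, hs2⟩ ⟨hs3, hs4⟩
        have : x (i+1) ≤ x j := hmono _ _ h hj.le
        have : s ≤ x j := (hs2.trans (min_le_right _ _)).trans this
        linarith
      · apply Set.disjoint_left.mpr
        rintro s ⟨hs1, hs2⟩ ⟨hs3, hs4⟩
        have : x (j+1) ≤ x i := hmono _ _ h hi.le
        have : s ≤ x i := (hs4.trans (min_le_right _ _)).trans this
        linarith
    have := Disjoint.image hpieces hinj (hsub i hi) (hsub j hj)
    rwa [himg i hi, himg j hj] at this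
  rw [cover, Set.image_iUnion₂]
  have hrw : (⋃ i ∈ Finset.range n, f '' Ioc (x i) (min t (x (i+1))))
      = ⋃ i ∈ Finset.range n, Ioc (μ i * x i + c i) (μ i * min t (x (i+1)) + c i) := by
    apply iUnion₂_congr
    intro i hi
    exact himg i (Finset.mem_range.mp hi)
  rw [hrw, MeasureTheory.measure_biUnion_finset hdisj (fun i _ => measurableSet_Ioc)]
  have hterm : ∀ i ∈ Finset.range n,
      MeasureTheory.volume (Ioc (μ i * x i + c i) (μ i * min t (x (i+1)) + c i))
      = ENNReal.ofReal (μ i * (min t (x (i+1)) - min t (x i))) := by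
    intro i hi
    have hi' := Finset.mem_range.mp hi
    have hμi := hμ i hi'
    rw [Real.volume_Ioc]
    rcases le_or_gt (x i) t with h | h
    · rw [min_eq_right h]; ring_nf
    · have h1 : min t (x i) = t := min_eq_left h.le
      have h2 : min t (x (i+1)) = t := min_eq_left (h.le.trans (hx i hi').le)
      rw [h1, h2]
      rw [ENNReal.ofReal_eq_zero.mpr (by nlinarith), ENNReal.ofReal_eq_zero.mpr (by nlinarith)]
  rw [Finset.sum_congr rfl hterm]
  unfold plSum
  rw [ENNReal.ofReal_sum_of_nonneg]
  intro i hi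
  have hi' := Finset.mem_range.mp hi
  have : min t (x i) ≤ min t (x (i+1)) := min_le_min (le_refl t) (hx i hi').le
  nlinarith [hμ i hi']

/-- Against any factorization `f = g' ∘ h'` with `g'` an interval exchange and `h'`
increasing, `h' t` equals the measure of `f '' (0,t]`. -/
private lemma volB {f g' h' : ℝ → ℝ} {ℓ : ℝ}
    (heq : Set.EqOn f (g' ∘ h') (Ioc 0 ℓ))
    (hbij : Set.BijOn h' (Ioc 0 ℓ) (Ioc 0 ℓ))
    (hsm : StrictMonoOn h' (Ioc 0 ℓ))
    {n : ℕ} {v e : ℕ → ℝ} (hn : 0 < n) (hv0 : v 0 = 0) (hvn : v n = ℓ)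
    (hv : ∀ i < n, v i < v (i+1))
    (hpiece : ∀ i < n, ∀ s ∈ Ioc (v i) (v (i + 1)), g' s = 1 * s + e i)
    (hg'inj : Set.InjOn g' (Ioc 0 ℓ)) :
    ∀ t ∈ Ioc 0 ℓ, MeasureTheory.volume (f '' Ioc 0 t) = ENNReal.ofReal (h' t) := by
  intro t ht
  have hht := hbij.mapsTo ht
  have himg1 : f '' Ioc 0 t = g' '' (h' '' Ioc 0 t) := by
    rw [← Set.image_comp]
    exact Set.EqOn.image_eq (heq.mono (Ioc_subset_Ioc_right ht.2))
  have himg2 : h' '' Ioc 0 t = Ioc 0 (h' t) := by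
    ext r; constructor
    · rintro ⟨s, hs, rfl⟩
      have hs' : s ∈ Ioc 0 ℓ := ⟨hs.1, hs.2.trans ht.2⟩
      exact ⟨(hbij.mapsTo hs').1, hsm.monotoneOn hs' ht hs.2⟩
    · rintro ⟨hr0, hr1⟩
      obtain ⟨s, hs, rfl⟩ := hbij.surjOn ⟨hr0, hr1.trans hht.2⟩
      refine ⟨s, ⟨hs.1, ?_⟩, rfl⟩
      by_contra hst
      push_neg at hst
      exact absurd (hsm ht hs hst) (not_lt.mpr hr1)
  rw [himg1, himg2]
  rw [volA hn hv0 hvn hv (fun i _ => one_pos) hpiece hg'inj hht.1.le hht.2]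
  congr 1
  unfold plSum
  simp only [one_mul]
  rw [Finset.sum_range_sub (fun j => min (h' t) (v j)), hv0, hvn,
    min_eq_left hht.2, min_eq_right (le_of_lt hht.1)]
  ring

/-- every `f ∈ V(Γ,Λ,ℓ)` factors uniquely as `f = g ∘ h` with
`g ∈ IE(Γ,ℓ)` and `h ∈ F(Γ,Λ,ℓ)`; that is, `V(Γ,Λ,ℓ) = IE(Γ,ℓ)·F(Γ,Λ,ℓ)` with unique
factorization (a Zappa–Szép product). -/
theorem steinV_zappa_szep (Λ : Set ℝ) (hΛpos : ∀ μ ∈ Λ, (0:ℝ) < μ) (hΛ1 : (1:ℝ) ∈ Λ)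
    (hΛmul : ∀ μ ∈ Λ, ∀ ν ∈ Λ, μ * ν ∈ Λ) (hΛinv : ∀ μ ∈ Λ, μ⁻¹ ∈ Λ)
    (Γ : AddSubgroup ℝ) (hΓΛ : ∀ μ ∈ Λ, ∀ x ∈ Γ, μ * x ∈ Γ)
    (ℓ : ℝ) (hℓΓ : ℓ ∈ Γ) (hℓ : 0 < ℓ) :
    ∀ f : ℝ → ℝ, IsSteinV (Γ : Set ℝ) Λ ℓ f →
      ∃ g h : ℝ → ℝ, IsSteinIE (Γ : Set ℝ) ℓ g ∧ IsSteinF (Γ : Set ℝ) Λ ℓ h ∧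
        Set.EqOn f (g ∘ h) (Ioc 0 ℓ) ∧
        ∀ g' h' : ℝ → ℝ, IsSteinIE (Γ : Set ℝ) ℓ g' → IsSteinF (Γ : Set ℝ) Λ ℓ h' →
          Set.EqOn f (g' ∘ h') (Ioc 0 ℓ) →
          Set.EqOn g g' (Ioc 0 ℓ) ∧ Set.EqOn h h' (Ioc 0 ℓ) := by
  intro f hf
  obtain ⟨hbij, n, x, μ, c, hn, hx0, hxn, hx, hxΓ, hμc, hpiece⟩ := hf
  have hμpos : ∀ i < n, 0 < μ i := fun i hi => hΛpos _ (hμc i hi).1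
  set y : ℕ → ℝ := fun i => ∑ j ∈ Finset.range i, μ j * (x (j+1) - x j) with hy
  have hy0 : y 0 = 0 := by simp [hy]
  have hyd : ∀ j, y (j+1) - y j = μ j * (x (j+1) - x j) := by
    intro j
    simp [hy, Finset.sum_range_succ]
  have hystep : ∀ i < n, y i < y (i+1) := by
    intro i hi
    have h1 := hyd i
    nlinarith [hμpos i hi, hx i hi]
  have hymono := seqMono hystep
  have hxmono := seqMono hx
  have hyΓ : ∀ i ≤ n, y i ∈ Γ := by
    intro i hi
    apply AddSubgroup.sum_mem
    intro j hj
    have hj' : j < n := lt_of_lt_of_le (Finset.mem_range.mp hj) hi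
    exact hΓΛ _ (hμc j hj').1 _ (sub_mem (hxΓ (j+1) hj') (hxΓ j hj'.le))
  -- y n = ℓ via the measure computation
  have hynl : y n = ℓ := by
    obtain ⟨m, rfl⟩ : ∃ m, n = m + 1 := ⟨n - 1, (Nat.succ_pred_eq_of_pos hn).symm⟩
    have hA := volA hn hx0 hxn hx hμpos hpiece hbij.injOn hℓ.le (le_refl ℓ)
    rw [hbij.image_eq, Real.volume_Ioc, sub_zero] at hA
    have hB : plSum (m+1) x μ ℓ = y (m+1) := by
      have h1 : x m ≤ ℓ := by rw [← hxn]; exact (hx m (by omega)).le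
      have h2 : ℓ ≤ x (m+1) := le_of_eq hxn.symm
      rw [plSum_piece hx (by omega) h1 h2]
      rw [show y (m+1) = y m + μ m * (x (m+1) - x m) by have := hyd m; linarith, hxn]
    rw [hB] at hA
    have hyn0 : 0 ≤ y (m+1) := by
      rw [← hy0]; exact hymono 0 (m+1) (Nat.zero_le _) (le_refl _)
    exact ((ENNReal.ofReal_eq_ofReal_iff hℓ.le hyn0).mp hA).symm
  -- the two PL functions
  set h : ℝ → ℝ := plSum n x μ with hhdef
  set hi : ℝ → ℝ := plSum n y (fun j => (μ j)⁻¹) with hidef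
  set g : ℝ → ℝ := f ∘ hi with hgdef
  have hxsum : ∀ i, i ≤ n → (∑ j ∈ Finset.range i, (μ j)⁻¹ * (y (j+1) - y j)) = x i := by
    intro i hin
    have hc : ∀ j ∈ Finset.range i, (μ j)⁻¹ * (y (j+1) - y j) = x (j+1) - x j := by
      intro j hj
      have hj' : j < n := lt_of_lt_of_le (Finset.mem_range.mp hj) hin
      rw [hyd j]
      exact inv_mul_cancel_left₀ (ne_of_gt (hμpos j hj')) _
    rw [Finset.sum_congr rfl hc, Finset.sum_range_sub, hx0, sub_zero]
  have hpieceh : ∀ i < n, ∀ t : ℝ, x i ≤ t → t ≤ x (i+1) →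
      h t = y i + μ i * (t - x i) := by
    intro i hi' t h1 h2
    rw [hhdef, plSum_piece hx hi' h1 h2]
  have hpiecei : ∀ i < n, ∀ s : ℝ, y i ≤ s → s ≤ y (i+1) →
      hi s = x i + (μ i)⁻¹ * (s - y i) := by
    intro i hi' s h1 h2
    rw [hidef, plSum_piece hystep hi' h1 h2, hxsum i hi'.le]
  -- h maps piece i into image piece i, with inverse hi
  have hkey2 : ∀ t ∈ Ioc 0 ℓ, h t ∈ Ioc 0 ℓ ∧ hi (h t) = t := by
    intro t ht
    obtain ⟨j, hj, hj1, hj2⟩ := findIoc x n hn hx t (by rw [hx0]; exact ht.1)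
      (by rw [hxn]; exact ht.2)
    have hμj := hμpos j hj
    have hht : h t = y j + μ j * (t - x j) := hpieceh j hj t hj1.le hj2
    have hmem : h t ∈ Ioc (y j) (y (j+1)) := by
      constructor
      · rw [hht]; nlinarith
      · rw [hht]; have := hyd j; nlinarith
    have hIoc : h t ∈ Ioc 0 ℓ := by
      constructor
      · exact lt_of_le_of_lt (by rw [← hy0]; exact hymono 0 j (Nat.zero_le j) hj.le) hmem.1
      · exact hmem.2.trans (by rw [← hynl]; exact hymono (j+1) n hj (le_refl n))
    refine ⟨hIoc, ?_⟩
    have hμj0 : μ j ≠ 0 := ne_of_gt hμj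
    rw [hpiecei j hj _ hmem.1.le hmem.2, hht]
    field_simp
    ring
  have hkey1 : ∀ s ∈ Ioc 0 ℓ, hi s ∈ Ioc 0 ℓ ∧ h (hi s) = s := by
    intro s hs
    obtain ⟨j, hj, hj1, hj2⟩ := findIoc y n hn hystep s (by rw [hy0]; exact hs.1)
      (by rw [hynl]; exact hs.2)
    have hμj := hμpos j hj
    have hμj' : (0:ℝ) < (μ j)⁻¹ := inv_pos.mpr hμj
    have hhis : hi s = x j + (μ j)⁻¹ * (s - y j) := hpiecei j hj s hj1.le hj2
    have hmem : hi s ∈ Ioc (x j) (x (j+1)) := by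
      constructor
      · rw [hhis]; nlinarith
      · rw [hhis]
        have hd := hyd j
        have h1 : s - y j ≤ μ j * (x (j+1) - x j) := by linarith
        have h2 : (μ j)⁻¹ * (s - y j) ≤ x (j+1) - x j := by
          rw [← mul_le_mul_iff_right₀ hμj, ← mul_assoc, mul_inv_cancel₀ (ne_of_gt hμj), one_mul]
          exact h1
        linarith
    have hIoc : hi s ∈ Ioc 0 ℓ := by
      constructor
      · exact lt_of_le_of_lt (by rw [← hx0]; exact hxmono 0 j (Nat.zero_le j) hj.le) hmem.1
      · exact hmem.2.trans (by rw [← hxn]; exact hxmono (j+1) n hj (le_refl n))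
    refine ⟨hIoc, ?_⟩
    have hμj0 : μ j ≠ 0 := ne_of_gt hμj
    rw [hpieceh j hj _ hmem.1.le hmem.2, hhis]
    field_simp
    ring
  -- bijectivity
  have hbijh : Set.BijOn h (Ioc 0 ℓ) (Ioc 0 ℓ) := by
    refine ⟨fun t ht => (hkey2 t ht).1, ?_, ?_⟩
    · intro a ha b hb hab
      have h1 := (hkey2 a ha).2
      have h2 := (hkey2 b hb).2
      rw [← h1, ← h2, hab]
    · intro s hs
      exact ⟨hi s, (hkey1 s hs).1, (hkey1 s hs).2⟩
  have hbiji : Set.BijOn hi (Ioc 0 ℓ) (Ioc 0 ℓ) := by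
    refine ⟨fun s hs => (hkey1 s hs).1, ?_, ?_⟩
    · intro a ha b hb hab
      have h1 := (hkey1 a ha).2
      have h2 := (hkey1 b hb).2
      rw [← h1, ← h2, hab]
    · intro t ht
      exact ⟨h t, (hkey2 t ht).1, (hkey2 t ht).2⟩
  have hbijg : Set.BijOn g (Ioc 0 ℓ) (Ioc 0 ℓ) := hbij.comp hbiji
  -- g pieces
  have hpieceg : ∀ i < n, ∀ s ∈ Ioc (y i) (y (i+1)), g s = 1 * s + (μ i * x i + c i - y i) := by
    intro i hi' s hs
    have hμi := hμpos i hi'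
    have hhis : hi s = x i + (μ i)⁻¹ * (s - y i) := hpiecei i hi' s hs.1.le hs.2
    have hmem : hi s ∈ Ioc (x i) (x (i+1)) := by
      have hμi' : (0:ℝ) < (μ i)⁻¹ := inv_pos.mpr hμi
      constructor
      · rw [hhis]; nlinarith [hs.1]
      · rw [hhis]
        have hd := hyd i
        have h1 : s - y i ≤ μ i * (x (i+1) - x i) := by have := hs.2; linarith
        have h2 : (μ i)⁻¹ * (s - y i) ≤ x (i+1) - x i := by
          rw [← mul_le_mul_iff_right₀ hμi, ← mul_assoc, mul_inv_cancel₀ (ne_of_gt hμi), one_mul]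
          exact h1
        linarith
    show f (hi s) = 1 * s + (μ i * x i + c i - y i)
    have hμi0 : μ i ≠ 0 := ne_of_gt hμi
    rw [hpiece i hi' _ hmem, hhis]
    field_simp
    ring
  -- the factorization equation
  have heqfgh : Set.EqOn f (g ∘ h) (Ioc 0 ℓ) := by
    intro t ht
    show f t = f (hi (h t))
    rw [(hkey2 t ht).2]
  -- SteinF structure of h
  have hsmh : StrictMonoOn h (Ioc 0 ℓ) := by
    have := plSum_strictMono hn hx hμpos
    rw [hx0, hxn] at this
    exact this.mono Ioc_subset_Icc_self
  have hsteinFh : IsSteinF (Γ : Set ℝ) Λ ℓ h := by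
    refine ⟨⟨hbijh, n, x, μ, fun i => y i - μ i * x i, hn, hx0, hxn, hx, hxΓ, ?_, ?_⟩,
      hsmh, (plSum_continuous n x μ).continuousOn⟩
    · intro i hi'
      exact ⟨(hμc i hi').1,
        sub_mem (hyΓ i hi'.le) (hΓΛ _ (hμc i hi').1 _ (hxΓ i hi'.le))⟩
    · intro i hi' t ht
      rw [hpieceh i hi' t ht.1.le ht.2]
      ring
  have hsteinIEg : IsSteinIE (Γ : Set ℝ) ℓ g := by
    refine ⟨hbijg, n, y, fun _ => 1, fun i => μ i * x i + c i - y i, hn, hy0, hynl,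
      hystep, hyΓ, ?_, hpieceg⟩
    intro i hi'
    exact ⟨rfl, sub_mem (add_mem (hΓΛ _ (hμc i hi').1 _ (hxΓ i hi'.le)) (hμc i hi').2)
      (hyΓ i hi'.le)⟩
  refine ⟨g, h, hsteinIEg, hsteinFh, heqfgh, ?_⟩
  -- uniqueness
  intro g' h' hg' hh' heq'
  obtain ⟨hbijg', n', v', μ', e', hn', hv0', hvn', hv', hvΓ', hμe', hpieceg'⟩ := hg'
  have hpieceg'1 : ∀ i < n', ∀ s ∈ Ioc (v' i) (v' (i+1)), g' s = 1 * s + e' i := by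
    intro i hi' s hs
    have h1 : μ' i = 1 := (hμe' i hi').1
    rw [hpieceg' i hi' s hs, h1]
  obtain ⟨⟨hbijh', _⟩, hsmh', hconth'⟩ := hh'
  have hV1 := volB heqfgh hbijh hsmh hn hy0 hynl hystep hpieceg hbijg.injOn
  have hV2 := volB heq' hbijh' hsmh' hn' hv0' hvn' hv' hpieceg'1 hbijg'.injOn
  have hEqh : Set.EqOn h h' (Ioc 0 ℓ) := by
    intro t ht
    have h1 := (hV1 t ht).symm.trans (hV2 t ht)
    have h2 : (0:ℝ) ≤ h t := (hbijh.mapsTo ht).1.le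
    have h3 : (0:ℝ) ≤ h' t := (hbijh'.mapsTo ht).1.le
    exact (ENNReal.ofReal_eq_ofReal_iff h2 h3).mp h1
  refine ⟨?_, hEqh⟩
  intro s hs
  obtain ⟨t, ht, rfl⟩ := hbijh.surjOn hs
  have h1 : g (h t) = f t := (heqfgh ht).symm
  have h2 : g' (h' t) = f t := (heq' ht).symm
  rw [h1, hEqh ht, h2]
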